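/- Let n ≥ 2 be an integer and d > 1, and let p : (0,∞) × (0,∞) → [0,∞) be measurable with p(η,t) ≤ d g_n(η,t) for all η, t > 0. Then for every x̃ > n−1, limsup_{t→∞} (1/t) · log ( ∫_{t x̃}^{∞} p(η,t) dη ) ≤ −(x̃−(n−1))²/4. -/

import Mathlib

open MeasureTheory Real Filter

/-- The Davies–Mandouvalos comparison function `g_n(η,t)` for the radial density of
hyperbolic Brownian motion on the `n`-dimensional Poincaré half-space. -/
noncomputable def hypg (n : ℕ) (η t : ℝ) : ℝ :=
  t ^ (-(n : ℝ) / 2) * (η / (1 + η)) ^ (n - 1) *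
    Real.exp (-(η - ((n : ℝ) - 1) * t) ^ 2 / (4 * t)) *
    (1 + η + t) ^ (((n : ℝ) - 3) / 2) * (1 + η)

/-- Polynomial is dominated by exponential. -/
lemma aux_poly_le_exp (n : ℕ) (hn : 1 ≤ n) (c : ℝ) (hc : 0 < c) (s : ℝ) (hs : 0 ≤ s) :
    (1 + s) ^ n ≤ (max 1 ((n : ℝ)/c)) ^ n * Real.exp (c * s) := by
  set K : ℝ := max 1 ((n : ℝ)/c) with hK
  have hK1 : (1:ℝ) ≤ K := le_max_left _ _
  have hKn : (n : ℝ)/c ≤ K := le_max_right _ _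
  have hnpos : (0:ℝ) < n := by exact_mod_cast hn
  have h1 : 1 + s ≤ K * (1 + c * s / n) := by
    have h2 : (1:ℝ) ≤ K * c / n := by
      have := (div_le_iff₀ hc).mp hKn
      rw [le_div_iff₀ hnpos]
      linarith
    have : s ≤ K * (c * s / n) := by
      have := mul_le_mul_of_nonneg_right h2 hs
      rw [one_mul] at this
      calc s ≤ K * c / n * s := this
      _ = K * (c * s / n) := by ring
    calc 1 + s ≤ K * 1 + K * (c * s / n) := by nlinarith
    _ = K * (1 + c * s / n) := by ring
  have h3 : K * (1 + c * s / n) ≤ K * Real.exp (c * s / n) := by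
    apply mul_le_mul_of_nonneg_left _ (by linarith)
    exact Real.add_one_le_exp _ |>.trans_eq' (by ring_nf)
  have h4 : (1 + s) ^ n ≤ (K * Real.exp (c * s / n)) ^ n := by
    apply pow_le_pow_left₀ (by linarith) (h1.trans h3)
  calc (1+s)^n ≤ (K * Real.exp (c * s / n)) ^ n := h4
  _ = K ^ n * Real.exp (c * s / n) ^ n := mul_pow _ _ _
  _ = K ^ n * Real.exp (c * s) := by
      rw [← Real.exp_nat_mul]
      congr 1
      field_simp

/-- Crude bound on `hypg` for `t ≥ 1`. -/
lemma aux_hypg_le (n : ℕ) (η t : ℝ) (hη : 0 < η) (ht : 1 ≤ t) :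
    hypg n η t ≤ (1 + η + t) ^ n * Real.exp (-(η - ((n : ℝ) - 1) * t) ^ 2 / (4 * t)) := by
  have ht0 : (0:ℝ) < t := lt_of_lt_of_le one_pos ht
  have hb : (1:ℝ) ≤ 1 + η + t := by linarith
  have hb0 : (0:ℝ) < 1 + η + t := by linarith
  have hncast : (0:ℝ) ≤ (n:ℝ) := Nat.cast_nonneg n
  set A := t ^ (-(n : ℝ) / 2) with hA
  set B := (η / (1 + η)) ^ (n - 1) with hB
  set E := Real.exp (-(η - ((n : ℝ) - 1) * t) ^ 2 / (4 * t)) with hE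
  set C := (1 + η + t) ^ (((n : ℝ) - 3) / 2) with hC
  have hA1 : A ≤ 1 := Real.rpow_le_one_of_one_le_of_nonpos ht (by linarith)
  have hA0 : 0 ≤ A := Real.rpow_nonneg ht0.le _
  have hB1 : B ≤ 1 := pow_le_one₀ (by positivity) (by rw [div_le_one (by linarith)]; linarith)
  have hB0 : 0 ≤ B := by positivity
  have hE0 : 0 ≤ E := Real.exp_nonneg _
  have hC0 : 0 ≤ C := Real.rpow_nonneg hb0.le _
  have hCle : C * (1 + η) ≤ (1 + η + t) ^ n := by
    have h1 : C ≤ (1 + η + t) ^ ((n:ℝ) - 1) :=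
      Real.rpow_le_rpow_of_exponent_le hb (by linarith)
    have h2 : C * (1 + η) ≤ (1 + η + t) ^ ((n:ℝ) - 1) * (1 + η + t) :=
      mul_le_mul h1 (by linarith) (by linarith) (Real.rpow_nonneg hb0.le _)
    calc C * (1 + η) ≤ (1 + η + t) ^ ((n:ℝ) - 1) * (1 + η + t) := h2
    _ = (1 + η + t) ^ ((n:ℝ)) := by
        rw [← Real.rpow_add_one hb0.ne' ((n:ℝ) - 1)]
        norm_num
    _ = (1 + η + t) ^ n := by rw [Real.rpow_natCast]
  have hAB : A * B ≤ 1 := mul_le_one₀ hA1 hB0 hB1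
  calc hypg n η t = (A * B) * (C * (1 + η)) * E := by rw [hypg]; ring
  _ ≤ 1 * ((1 + η + t) ^ n) * E := by
      apply mul_le_mul_of_nonneg_right _ hE0
      exact mul_le_mul hAB hCle (by positivity) one_pos.le
  _ = (1 + η + t) ^ n * E := by ring

/-- Upper-tail large deviation upper bound for the radial component of hyperbolic
Brownian motion: for every `x̃ > n-1`,
`limsup_{t→∞} (1/t) log P(D_n(t)/t ≥ x̃) ≤ -(x̃-(n-1))²/4`. -/
theorem ldp_upper_bound_upper_tail (n : ℕ) (hn : 2 ≤ n) (d : ℝ) (hd : 1 < d)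
    (p : ℝ → ℝ → ℝ) (hp : Measurable (Function.uncurry p))
    (hp_nonneg : ∀ η t : ℝ, 0 < η → 0 < t → 0 ≤ p η t)
    (hp_le : ∀ η t : ℝ, 0 < η → 0 < t → p η t ≤ d * hypg n η t)
    (xtil : ℝ) (hx : (n : ℝ) - 1 < xtil) :
    Filter.limsup
        (fun t : ℝ => ((t⁻¹ : ℝ) : EReal) *
          ENNReal.log (∫⁻ η in {η : ℝ | 0 < η ∧ t * xtil ≤ η}, ENNReal.ofReal (p η t)))
        Filter.atTop ≤
      ((-((xtil - ((n : ℝ) - 1)) ^ 2 / 4) : ℝ) : EReal) := by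
  have hn1 : (1:ℝ) ≤ (n:ℝ) - 1 := by
    have : (2:ℝ) ≤ (n:ℝ) := by exact_mod_cast hn
    linarith
  set δ : ℝ := xtil - ((n : ℝ) - 1) with hδdef
  have hδ : 0 < δ := by simp only [hδdef]; linarith
  have hx0 : (0:ℝ) < xtil := by linarith
  set c : ℝ := δ / 4 with hcdef
  have hc : 0 < c := by positivity
  set K : ℝ := max 1 ((n : ℝ)/c) with hKdef
  have hK1 : (1:ℝ) ≤ K := le_max_left _ _
  set R : ℝ → ℝ := fun t => d * K ^ n * (1 + t * (xtil + 1)) ^ n *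
      Real.exp (-(t * δ ^ 2 / 4)) * c⁻¹ with hRdef
  have hRpos : ∀ t : ℝ, 1 ≤ t → 0 < R t := by
    intro t ht
    have h1 : (0:ℝ) < 1 + t * (xtil + 1) := by nlinarith
    have hd0 : (0:ℝ) < d := by linarith
    have hK0 : (0:ℝ) < K := by linarith
    positivity
  -- pointwise bound
  have hpoint : ∀ t : ℝ, 1 ≤ t → ∀ η : ℝ, 0 < η → t * xtil ≤ η →
      p η t ≤ d * K ^ n * (1 + t * (xtil + 1)) ^ n * Real.exp (-(t * δ ^ 2 / 4)) *
        Real.exp (-(c * (η - t * xtil))) := by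
    intro t ht η hη hηa
    have ht0 : (0:ℝ) < t := lt_of_lt_of_le one_pos ht
    have hd0 : (0:ℝ) < d := by linarith
    set s : ℝ := η - t * xtil with hsdef
    have hs : 0 ≤ s := by simp only [hsdef]; linarith
    -- exponent bound
    have hexp : -(η - ((n : ℝ) - 1) * t) ^ 2 / (4 * t) ≤ -(t * δ ^ 2 / 4) - 2 * c * s := by
      have hu : η - ((n : ℝ) - 1) * t = δ * t + s := by
        simp only [hδdef, hsdef]; ring
      have key : t * δ ^ 2 / 4 + δ * s / 2 ≤ (δ * t + s) ^ 2 / (4 * t) := by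
        rw [le_div_iff₀ (by positivity)]
        nlinarith [sq_nonneg s]
      have h2cs : 2 * c * s = δ * s / 2 := by simp only [hcdef]; ring
      rw [hu]
      rw [neg_div]
      linarith
    -- polynomial bound
    have hpoly : (1 + η + t) ^ n ≤ (1 + t * (xtil + 1)) ^ n * (1 + s) ^ n := by
      rw [← mul_pow]
      apply pow_le_pow_left₀ (by linarith)
      have h : 1 + η + t = 1 + t * (xtil + 1) + s := by simp only [hsdef]; ring
      nlinarith [mul_nonneg (mul_nonneg ht0.le (by linarith : (0:ℝ) ≤ xtil + 1)) hs]
    have hpolyexp : (1 + s) ^ n ≤ K ^ n * Real.exp (c * s) :=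
      aux_poly_le_exp n (by omega) c hc s hs
    have h1 : p η t ≤ d * hypg n η t := hp_le η t hη ht0
    have h2 := aux_hypg_le n η t hη ht
    have hEexp : Real.exp (-(η - ((n : ℝ) - 1) * t) ^ 2 / (4 * t)) ≤
        Real.exp (-(t * δ ^ 2 / 4) - 2 * c * s) := Real.exp_le_exp.mpr hexp
    have h3 : hypg n η t ≤ (1 + t * (xtil + 1)) ^ n * (K ^ n * Real.exp (c * s)) *
        Real.exp (-(t * δ ^ 2 / 4) - 2 * c * s) := by
      calc hypg n η t ≤ (1 + η + t) ^ n *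
            Real.exp (-(η - ((n : ℝ) - 1) * t) ^ 2 / (4 * t)) := h2
      _ ≤ (1 + t * (xtil + 1)) ^ n * (K ^ n * Real.exp (c * s)) *
            Real.exp (-(t * δ ^ 2 / 4) - 2 * c * s) := by
          apply mul_le_mul (hpoly.trans _) hEexp (Real.exp_nonneg _) (by positivity)
          apply mul_le_mul_of_nonneg_left hpolyexp (by positivity)
    calc p η t ≤ d * hypg n η t := h1
    _ ≤ d * ((1 + t * (xtil + 1)) ^ n * (K ^ n * Real.exp (c * s)) *
          Real.exp (-(t * δ ^ 2 / 4) - 2 * c * s)) := by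
        exact mul_le_mul_of_nonneg_left h3 hd0.le
    _ = d * K ^ n * (1 + t * (xtil + 1)) ^ n * Real.exp (-(t * δ ^ 2 / 4)) *
          Real.exp (-(c * s)) := by
        have hE : Real.exp (c * s) * Real.exp (-(t * δ ^ 2 / 4) - 2 * c * s)
            = Real.exp (-(t * δ ^ 2 / 4)) * Real.exp (-(c * s)) := by
          rw [← Real.exp_add, ← Real.exp_add]; congr 1; ring
        calc d * ((1 + t * (xtil + 1)) ^ n * (K ^ n * Real.exp (c * s)) *
              Real.exp (-(t * δ ^ 2 / 4) - 2 * c * s))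
            = d * K ^ n * (1 + t * (xtil + 1)) ^ n *
              (Real.exp (c * s) * Real.exp (-(t * δ ^ 2 / 4) - 2 * c * s)) := by ring
        _ = d * K ^ n * (1 + t * (xtil + 1)) ^ n *
              (Real.exp (-(t * δ ^ 2 / 4)) * Real.exp (-(c * s))) := by rw [hE]
        _ = d * K ^ n * (1 + t * (xtil + 1)) ^ n * Real.exp (-(t * δ ^ 2 / 4)) *
              Real.exp (-(c * s)) := by ring
  -- integral bound
  have hI : ∀ t : ℝ, 1 ≤ t →
      (∫⁻ η in {η : ℝ | 0 < η ∧ t * xtil ≤ η}, ENNReal.ofReal (p η t)) ≤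
        ENNReal.ofReal (R t) := by
    intro t ht
    have ht0 : (0:ℝ) < t := lt_of_lt_of_le one_pos ht
    set a : ℝ := t * xtil with hadef
    have ha : 0 < a := by positivity
    set Q : ℝ := d * K ^ n * (1 + t * (xtil + 1)) ^ n * Real.exp (-(t * δ ^ 2 / 4))
      with hQdef
    have hQ0 : 0 ≤ Q := by
      have h1 : (0:ℝ) < 1 + t * (xtil + 1) := by nlinarith
      have hd0 : (0:ℝ) < d := by linarith
      positivity
    have hSmeas : MeasurableSet {η : ℝ | 0 < η ∧ a ≤ η} := by
      have : {η : ℝ | 0 < η ∧ a ≤ η} = Set.Ioi 0 ∩ Set.Ici a := by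
        ext η; simp [Set.mem_Ioi, Set.mem_Ici, Set.mem_setOf_eq]
      rw [this]
      exact measurableSet_Ioi.inter measurableSet_Ici
    have step1 : (∫⁻ η in {η : ℝ | 0 < η ∧ a ≤ η}, ENNReal.ofReal (p η t)) ≤
        ∫⁻ η in {η : ℝ | 0 < η ∧ a ≤ η},
          ENNReal.ofReal (Q * Real.exp (-(c * (η - a)))) := by
      apply setLIntegral_mono' hSmeas
      intro η hη
      exact ENNReal.ofReal_le_ofReal (hpoint t ht η hη.1 hη.2)
    have step2 : (∫⁻ η in {η : ℝ | 0 < η ∧ a ≤ η},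
          ENNReal.ofReal (Q * Real.exp (-(c * (η - a))))) ≤
        ∫⁻ η in Set.Ioi a, ENNReal.ofReal (Q * Real.exp (-(c * (η - a)))) := by
      refine (lintegral_mono_set (fun η hη => hη.2)).trans_eq ?_
      exact setLIntegral_congr (MeasureTheory.Ioi_ae_eq_Ici (μ := volume) (a := a)).symm
    have hfun : ∀ η : ℝ, Q * Real.exp (-(c * (η - a))) =
        (Q * Real.exp (c * a)) * Real.exp (-(c * η)) := by
      intro η
      have h : Real.exp (-(c * (η - a))) = Real.exp (c * a) * Real.exp (-(c * η)) := by
        rw [← Real.exp_add]; congr 1; ring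
      rw [h]; ring
    have hint : (∫⁻ η in Set.Ioi a, ENNReal.ofReal (Real.exp (-(c * η)))) =
        ENNReal.ofReal (c⁻¹ * Real.exp (-(c * a))) := by
      rw [← ofReal_integral_eq_lintegral_ofReal]
      · congr 1
        have h := integral_comp_mul_left_Ioi (fun y => Real.exp (-y)) a hc
        simp only [smul_eq_mul] at h
        rw [show (fun η : ℝ => Real.exp (-(c * η))) = fun x : ℝ => Real.exp (-(c * x))
          from rfl]
        rw [h, integral_exp_neg_Ioi]
      · have := exp_neg_integrableOn_Ioi a hc
        exact (by simpa [neg_mul] using this : IntegrableOn (fun x : ℝ => Real.exp (-(c * x))) (Set.Ioi a) volume)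
      · exact Filter.Eventually.of_forall fun x => Real.exp_nonneg _
    have step3 : (∫⁻ η in Set.Ioi a, ENNReal.ofReal (Q * Real.exp (-(c * (η - a))))) =
        ENNReal.ofReal (R t) := by
      simp_rw [hfun]
      rw [show (fun η : ℝ => ENNReal.ofReal ((Q * Real.exp (c * a)) * Real.exp (-(c * η))))
        = fun η : ℝ => ENNReal.ofReal (Q * Real.exp (c * a)) *
          ENNReal.ofReal (Real.exp (-(c * η))) from funext fun η =>
            ENNReal.ofReal_mul (by positivity)]
      rw [lintegral_const_mul' _ _ ENNReal.ofReal_ne_top, hint, ← ENNReal.ofReal_mul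
        (by positivity)]
      congr 1
      have hea : Real.exp (c * a) * Real.exp (-(c * a)) = 1 := by
        rw [← Real.exp_add]; simp
      calc Q * Real.exp (c * a) * (c⁻¹ * Real.exp (-(c * a)))
          = Q * c⁻¹ * (Real.exp (c * a) * Real.exp (-(c * a))) := by ring
      _ = Q * c⁻¹ := by rw [hea, mul_one]
      _ = R t := by rw [hRdef]
    calc (∫⁻ η in {η : ℝ | 0 < η ∧ t * xtil ≤ η}, ENNReal.ofReal (p η t))
        ≤ ∫⁻ η in Set.Ioi a, ENNReal.ofReal (Q * Real.exp (-(c * (η - a)))) :=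
          step1.trans step2
    _ = ENNReal.ofReal (R t) := step3
  -- the real-valued asymptotic bound
  obtain ⟨L0, hL0⟩ : ∃ L0 : ℝ, L0 = Real.log (d * K ^ n * c⁻¹) := ⟨_, rfl⟩
  set ψ : ℝ → ℝ := fun t => t⁻¹ * L0 + (n : ℝ) * (Real.log (1 + t * (xtil + 1)) / t)
    - δ ^ 2 / 4 with hψdef
  have hlogR : ∀ t : ℝ, 1 ≤ t → t⁻¹ * Real.log (R t) = ψ t := by
    intro t ht
    have ht0 : (0:ℝ) < t := lt_of_lt_of_le one_pos ht
    have hP : (0:ℝ) < 1 + t * (xtil + 1) := by nlinarith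
    have hd0 : (0:ℝ) < d := by linarith
    have hK0 : (0:ℝ) < K := by linarith
    have hR : R t = (d * K ^ n * c⁻¹) *
        ((1 + t * (xtil + 1)) ^ n * Real.exp (-(t * δ ^ 2 / 4))) := by
      rw [hRdef]; ring
    rw [hR, Real.log_mul (by positivity) (by positivity),
      Real.log_mul (by positivity) (Real.exp_ne_zero _), Real.log_pow, Real.log_exp,
      ← hL0]
    simp only [hψdef, div_eq_mul_inv]
    have htt : t⁻¹ * t = 1 := inv_mul_cancel₀ ht0.ne'
    linear_combination (-(δ ^ 2 / 4)) * htt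
  have hlogtend : Tendsto (fun t : ℝ => Real.log (1 + t * (xtil + 1)) / t) atTop (nhds 0) := by
    have hxp : (0:ℝ) < xtil + 1 := by linarith
    have base := Real.tendsto_pow_log_div_mul_add_atTop ((xtil + 1)⁻¹) (-(xtil + 1)⁻¹) 1
      (by positivity)
    have comp : Tendsto (fun t : ℝ => 1 + t * (xtil + 1)) atTop atTop :=
      tendsto_atTop_add_const_left _ 1 (tendsto_id.atTop_mul_const hxp)
    have := base.comp comp
    refine this.congr fun t => ?_
    simp only [Function.comp_apply, pow_one]
    congr 1
    field_simp
    ring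
  have hψt : Tendsto ψ atTop (nhds ((0:ℝ) * L0 + (n : ℝ) * 0 - δ ^ 2 / 4)) := by
    refine Tendsto.sub ?_ tendsto_const_nhds
    exact (tendsto_inv_atTop_zero.mul_const L0).add (hlogtend.const_mul _)
  have hlim : ((0:ℝ) * L0 + (n : ℝ) * 0 - δ ^ 2 / 4) = -(δ ^ 2 / 4) := by ring
  rw [hlim] at hψt
  -- eventual bound in EReal
  have hev : ∀ᶠ t : ℝ in atTop,
      ((t⁻¹ : ℝ) : EReal) *
          ENNReal.log (∫⁻ η in {η : ℝ | 0 < η ∧ t * xtil ≤ η}, ENNReal.ofReal (p η t)) ≤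
        ((ψ t : ℝ) : EReal) := by
    filter_upwards [eventually_ge_atTop (1:ℝ)] with t ht
    have ht0 : (0:ℝ) < t := lt_of_lt_of_le one_pos ht
    have hlog : ENNReal.log (∫⁻ η in {η : ℝ | 0 < η ∧ t * xtil ≤ η},
        ENNReal.ofReal (p η t)) ≤ ((Real.log (R t) : ℝ) : EReal) := by
      rw [← ENNReal.log_ofReal_of_pos (hRpos t ht)]
      exact ENNReal.log_monotone (hI t ht)
    have hmul := mul_le_mul_of_nonneg_left hlog
      (show (0:EReal) ≤ ((t⁻¹ : ℝ) : EReal) from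
        EReal.coe_nonneg.mpr (inv_nonneg.mpr ht0.le))
    refine hmul.trans_eq ?_
    rw [← EReal.coe_mul, hlogR t ht]
  -- conclude
  have hcoe : Tendsto (fun t : ℝ => ((ψ t : ℝ) : EReal)) atTop (nhds ((-(δ ^ 2 / 4) : ℝ) : EReal)) :=
    EReal.tendsto_coe.mpr hψt
  calc Filter.limsup
        (fun t : ℝ => ((t⁻¹ : ℝ) : EReal) *
          ENNReal.log (∫⁻ η in {η : ℝ | 0 < η ∧ t * xtil ≤ η}, ENNReal.ofReal (p η t)))
        Filter.atTop ≤
      Filter.limsup (fun t : ℝ => ((ψ t : ℝ) : EReal)) Filter.atTop :=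
        limsup_le_limsup hev
  _ = ((-(δ ^ 2 / 4) : ℝ) : EReal) := hcoe.limsup_eq
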